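/- Let 0 < λ₁ ≤ λ₂ ≤ … satisfy ∑_k e^{-λ_k t} < ∞ for all t > 0, set R_σ(Λ) = ∑_k (Λ−λ_k)₊^σ, and suppose for some constants C > 0, a > 0, σ ≥ 1 that R_σ(Λ) ≤ C·Λ^{σ+a} for all Λ > 0. Then for every λ with 0 ≤ λ ≤ λ₁ and every t > 0, ∑_k e^{-λ_k t} ≤ (C/(Γ(σ+1) t^a)) · Γ(σ+a+1) · Γ̂(σ+a+1, λt), where Γ̂(z,s) = (∫_s^∞ u^{z-1} e^{-u} du)/Γ(z) is the normalized upper incomplete Gamma function. -/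

import Mathlib

open MeasureTheory Real

/-- Normalized upper incomplete Gamma function `Γ̂(z,s)`. -/
noncomputable def upperGamma (z s : ℝ) : ℝ :=
  (∫ u in Set.Ioi s, u ^ (z - 1) * Real.exp (-u)) / Real.Gamma z

open Set

-- integrability helper
lemma intOn (s t c : ℝ) (hs : 0 ≤ s) (ht : 0 < t) (hc : 0 ≤ c) :
    IntegrableOn (fun x : ℝ => x ^ s * Real.exp (-x * t)) (Ioi c) := by
  have h := integrableOn_rpow_mul_exp_neg_mul_rpow (p := 1) (s := s) (b := t)
    (by linarith) one_pos ht
  have h2 : IntegrableOn (fun x : ℝ => x ^ s * Real.exp (-x * t)) (Ioi 0) := by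
    refine h.congr_fun (fun x hx => ?_) measurableSet_Ioi
    dsimp only; rw [Real.rpow_one]; ring_nf
  exact h2.mono_set (Ioi_subset_Ioi hc)

lemma g_meas (b t σ : ℝ) :
    Measurable (fun Λ : ℝ => (max (Λ - b) 0) ^ σ * Real.exp (-Λ * t)) := by
  apply Measurable.mul
  · exact ((measurable_id.sub_const b).max measurable_const).pow_const σ
  · exact (measurable_id.neg.mul_const t).exp

lemma g_intOn {b c t σ : ℝ} (hc : 0 ≤ c) (hb : c ≤ b) (ht : 0 < t) (hσ : 1 ≤ σ) :
    IntegrableOn (fun Λ : ℝ => (max (Λ - b) 0) ^ σ * Real.exp (-Λ * t)) (Ioi c) := by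
  refine Integrable.mono' (intOn σ t c (by linarith) ht hc)
    ((g_meas b t σ).aestronglyMeasurable) ?_
  filter_upwards [ae_restrict_mem measurableSet_Ioi] with Λ hΛ
  have hΛ0 : 0 < Λ := lt_of_le_of_lt hc hΛ
  have h1 : (0:ℝ) ≤ max (Λ - b) 0 := le_max_right _ _
  rw [Real.norm_of_nonneg (by positivity)]
  have hb0 : (0:ℝ) ≤ b := le_trans hc hb
  gcongr
  exact max_le (by linarith) hΛ0.le

lemma key_integral {b c t σ : ℝ} (hc : c ≤ b) (ht : 0 < t) (hσ : 1 ≤ σ) :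
    ∫ Λ in Ioi c, (max (Λ - b) 0) ^ σ * Real.exp (-Λ * t)
      = Real.exp (-b * t) * ((1 / t) ^ (σ + 1) * Real.Gamma (σ + 1)) := by
  set g : ℝ → ℝ := fun Λ => (max (Λ - b) 0) ^ σ * Real.exp (-Λ * t) with hg
  have hσ0 : σ ≠ 0 := by linarith
  have hgz : ∀ Λ ≤ b, g Λ = 0 := by
    intro Λ h
    simp [hg, max_eq_right (sub_nonpos.2 h), Real.zero_rpow hσ0]
  have hind : ∀ Λ, g Λ = (Ioi b).indicator g Λ := by
    intro Λ
    by_cases h : Λ ∈ Ioi b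
    · rw [indicator_of_mem h]
    · rw [indicator_of_notMem h, hgz Λ (le_of_not_gt h)]
  calc ∫ Λ in Ioi c, g Λ = ∫ Λ in Ioi c, (Ioi b).indicator g Λ := by
        exact integral_congr_ae (Filter.Eventually.of_forall fun Λ => hind Λ)
    _ = ∫ Λ in Ioi c ∩ Ioi b, g Λ := setIntegral_indicator measurableSet_Ioi
    _ = ∫ Λ in Ioi b, g Λ := by rw [Ioi_inter_Ioi, max_eq_right hc]
    _ = ∫ Λ, (Ioi b).indicator g Λ := (integral_indicator measurableSet_Ioi).symm
    _ = ∫ x, (Ioi b).indicator g (x + b) := (integral_add_right_eq_self _ b).symm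
    _ = ∫ x, (Ioi (0:ℝ)).indicator (fun u => Real.exp (-b * t) * (u ^ σ * Real.exp (-(t * u)))) x := by
        congr 1; ext x
        by_cases h : 0 < x
        · rw [indicator_of_mem (by simpa using h), indicator_of_mem (mem_Ioi.mpr h)]
          simp only [hg, add_sub_cancel_right, max_eq_left h.le]
          rw [show -(x + b) * t = -b * t + -(t * x) by ring, Real.exp_add]
          ring
        · rw [indicator_of_notMem (by simpa using h), indicator_of_notMem (by simpa using h)]
    _ = ∫ x in Ioi (0:ℝ), Real.exp (-b * t) * (x ^ σ * Real.exp (-(t * x))) :=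
        integral_indicator measurableSet_Ioi
    _ = Real.exp (-b * t) * ∫ x in Ioi (0:ℝ), x ^ σ * Real.exp (-(t * x)) :=
        integral_const_mul _ _
    _ = Real.exp (-b * t) * ((1 / t) ^ (σ + 1) * Real.Gamma (σ + 1)) := by
        congr 1
        have := Real.integral_rpow_mul_exp_neg_mul_Ioi (a := σ + 1) (r := t)
          (by linarith) ht
        rw [← this]
        congr 1; ext x; rw [add_sub_cancel_right]

lemma rhs_integral {c t s : ℝ} (hc : 0 ≤ c) (ht : 0 < t) :
    ∫ x in Ioi c, x ^ s * Real.exp (-x * t)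
      = t ^ (-s) * (t⁻¹ * ∫ u in Ioi (t * c), u ^ s * Real.exp (-u)) := by
  have h := integral_comp_mul_left_Ioi (fun u => u ^ s * Real.exp (-u)) c ht
  simp only [smul_eq_mul] at h
  have h2 : ∫ x in Ioi c, (t * x) ^ s * Real.exp (-(t * x))
      = t ^ s * ∫ x in Ioi c, x ^ s * Real.exp (-x * t) := by
    rw [← integral_const_mul]
    refine setIntegral_congr_fun measurableSet_Ioi (fun x hx => ?_)
    have hx0 : 0 ≤ x := le_trans hc (le_of_lt hx)
    rw [Real.mul_rpow ht.le hx0]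
    ring_nf
  rw [h2] at h
  have hts : (0:ℝ) < t ^ s := Real.rpow_pos_of_pos ht s
  rw [Real.rpow_neg ht.le]
  field_simp at h ⊢
  have e : ∀ x : ℝ, -(t * x) = -(x * t) := fun x => by ring
  simp only [e]
  linarith [h]

/-- From a Berezin–Li–Yau type bound `R_σ(Λ) ≤ C Λ^{σ+a}` one deduces an
exponentially decaying bound on the heat trace. -/
theorem heat_trace_bound_of_riesz_bound (lam : ℕ → ℝ) (hpos : 0 < lam 0)
    (hmono : Monotone lam)
    (hsum : ∀ t : ℝ, 0 < t → Summable fun k => Real.exp (-lam k * t))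
    (C a σ : ℝ) (hC : 0 < C) (ha : 0 < a) (hσ : 1 ≤ σ)
    (hR : ∀ Λ : ℝ, 0 < Λ → (∑' k : ℕ, (max (Λ - lam k) 0) ^ σ) ≤ C * Λ ^ (σ + a))
    (lam₀ t : ℝ) (hlam₀ : 0 ≤ lam₀) (hlam₁ : lam₀ ≤ lam 0) (ht : 0 < t) :
    (∑' k : ℕ, Real.exp (-lam k * t))
      ≤ C / (Real.Gamma (σ + 1) * t ^ a) * Real.Gamma (σ + a + 1)
          * upperGamma (σ + a + 1) (lam₀ * t) := by
  set f : ℕ → ℝ → ℝ := fun k Λ => (max (Λ - lam k) 0) ^ σ * Real.exp (-Λ * t) with hf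
  set K : ℝ := (1 / t) ^ (σ + 1) * Real.Gamma (σ + 1) with hK
  set I : ℝ := ∫ u in Ioi (t * lam₀), u ^ (σ + a) * Real.exp (-u) with hI
  have hΓ1 : 0 < Real.Gamma (σ + 1) := Real.Gamma_pos_of_pos (by linarith)
  have hKpos : 0 < K := mul_pos (Real.rpow_pos_of_pos (by positivity) _) hΓ1
  have hlamk : ∀ k, lam₀ ≤ lam k := fun k => le_trans hlam₁ (hmono (Nat.zero_le k))
  have hint : ∀ k, IntegrableOn (f k) (Ioi lam₀) :=
    fun k => g_intOn hlam₀ (hlamk k) ht hσ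
  have hval : ∀ k, ∫ Λ in Ioi lam₀, f k Λ = Real.exp (-lam k * t) * K :=
    fun k => key_integral (hlamk k) ht hσ
  have hS : Summable fun k => Real.exp (-lam k * t) * K := (hsum t ht).mul_right K
  have hswap : ∑' k, ∫ Λ in Ioi lam₀, f k Λ = ∫ Λ in Ioi lam₀, ∑' k, f k Λ := by
    refine integral_tsum_of_summable_integral_norm hint ?_
    have : (fun k => ∫ Λ in Ioi lam₀, ‖f k Λ‖) = fun k => ∫ Λ in Ioi lam₀, f k Λ := by
      funext k
      refine integral_congr_ae (Filter.Eventually.of_forall fun Λ => ?_)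
      exact Real.norm_of_nonneg (by positivity)
    rw [this]
    exact hS.congr fun k => (hval k).symm
  have hpt : ∀ Λ : ℝ, ∑' k, f k Λ
      = (∑' k, (max (Λ - lam k) 0) ^ σ) * Real.exp (-Λ * t) := fun Λ => tsum_mul_right
  have hRnn : ∀ Λ : ℝ, 0 ≤ ∑' k, (max (Λ - lam k) 0) ^ σ :=
    fun Λ => tsum_nonneg fun k => by positivity
  have hdint : Integrable (fun Λ : ℝ => C * (Λ ^ (σ + a) * Real.exp (-Λ * t)))
      (volume.restrict (Ioi lam₀)) :=
    (intOn (σ + a) t lam₀ (by linarith) ht hlam₀).const_mul C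
  have hmonoI : ∫ Λ in Ioi lam₀, ∑' k, f k Λ
      ≤ ∫ Λ in Ioi lam₀, C * (Λ ^ (σ + a) * Real.exp (-Λ * t)) := by
    refine integral_mono_of_nonneg ?_ hdint ?_
    · filter_upwards with Λ
      rw [hpt Λ]
      exact mul_nonneg (hRnn Λ) (Real.exp_nonneg _)
    · rw [Filter.EventuallyLE, ae_restrict_iff' measurableSet_Ioi]
      filter_upwards with Λ hΛ
      have hΛ0 : 0 < Λ := lt_of_le_of_lt hlam₀ hΛ
      rw [hpt Λ, ← mul_assoc]
      exact mul_le_mul_of_nonneg_right (hR Λ hΛ0) (Real.exp_nonneg _)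
  have hrhs : ∫ Λ in Ioi lam₀, C * (Λ ^ (σ + a) * Real.exp (-Λ * t))
      = C * (t ^ (-(σ + a)) * (t⁻¹ * I)) := by
    rw [integral_const_mul, rhs_integral hlam₀ ht]
  have hchain : (∑' k, Real.exp (-lam k * t)) * K
      ≤ C * (t ^ (-(σ + a)) * (t⁻¹ * I)) := by
    calc (∑' k, Real.exp (-lam k * t)) * K = ∑' k, Real.exp (-lam k * t) * K :=
          tsum_mul_right.symm
      _ = ∑' k, ∫ Λ in Ioi lam₀, f k Λ := by
          exact tsum_congr fun k => (hval k).symm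
      _ = ∫ Λ in Ioi lam₀, ∑' k, f k Λ := hswap
      _ ≤ _ := le_of_le_of_eq hmonoI hrhs
  have hΓ2 : 0 < Real.Gamma (σ + a + 1) := Real.Gamma_pos_of_pos (by linarith)
  have hUG : Real.Gamma (σ + a + 1) * upperGamma (σ + a + 1) (lam₀ * t) = I := by
    rw [upperGamma, mul_comm, div_mul_cancel₀ _ hΓ2.ne', hI, mul_comm t lam₀]
    norm_num
  have hfin : C * (t ^ (-(σ + a)) * (t⁻¹ * I)) / K
      = C / (Real.Gamma (σ + 1) * t ^ a) * I := by
    rw [hK, one_div, Real.inv_rpow ht.le, Real.rpow_neg ht.le]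
    have hta : (0:ℝ) < t ^ a := Real.rpow_pos_of_pos ht a
    have hts1 : (0:ℝ) < t ^ (σ + 1) := Real.rpow_pos_of_pos ht _
    have htsa : (0:ℝ) < t ^ (σ + a) := Real.rpow_pos_of_pos ht _
    have haux : t ^ (σ + 1) * t ^ a = t ^ (σ + a) * t := by
      rw [← Real.rpow_add ht, show σ + 1 + a = σ + a + 1 by ring, Real.rpow_add ht,
        Real.rpow_one]
    field_simp
    linear_combination I * haux
  calc (∑' k, Real.exp (-lam k * t))
      ≤ C * (t ^ (-(σ + a)) * (t⁻¹ * I)) / K := (le_div_iff₀ hKpos).mpr hchain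
    _ = C / (Real.Gamma (σ + 1) * t ^ a) * I := hfin
    _ = _ := by rw [← hUG]; ring
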